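/- (Robustness of binary N-state distributions.) Fix N ≥ 2 and a real ε with 0 ≤ ε ≤ ½. Then for every triple (p, p̃, (i, j)) in the perturbed-pair family 𝒫(ε) and every state s, |p̃ s − p s| ≤ 3ε; moreover the boundary states satisfy the stronger bounds |p̃ i − p i| ≤ 2ε and |p̃ j − p j| ≤ 2ε. -/
import Mathlib


noncomputable section

/-- Series composition: distribution of `min` of two independent states. -/
def smin {N : ℕ} (p q : Fin N → ℝ) : Fin N → ℝ :=
  fun k => ∑ i, ∑ j, if min i j = k then p i * q j else 0

/-- Parallel composition: distribution of `max` of two independent states. -/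
def smax {N : ℕ} (p q : Fin N → ℝ) : Fin N → ℝ :=
  fun k => ∑ i, ∑ j, if max i j = k then p i * q j else 0

/-- The point mass at state `s`. -/
def delta {N : ℕ} (s : Fin N) : Fin N → ℝ := fun i => if i = s then 1 else 0

/-- The vector with value `a` at state `0`, `b` at state `N-1`, `0` elsewhere
(i.e. `a·δ₀ + b·δ_{N-1}` for `N ≥ 2`). -/
def endSwitch (N : ℕ) (a b : ℝ) : Fin N → ℝ :=
  fun i => (if (i : ℕ) = 0 then a else 0) + (if (i : ℕ) = N - 1 then b else 0)

open Finset

lemma smin_end {N : ℕ} (hN : 0 < N) (a b : ℝ) (u : Fin N → ℝ) (k : Fin N) :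
    smin (endSwitch N a b) u k =
      (if (⟨0, hN⟩ : Fin N) = k then a * ∑ t, u t else 0) + b * u k := by
  have hNl : N - 1 < N := by omega
  unfold smin endSwitch
  have h1 : ∀ i t : Fin N,
      (if min i t = k then
        ((if (i : ℕ) = 0 then a else 0) + (if (i : ℕ) = N - 1 then b else 0)) * u t else 0)
      = (if i = (⟨0, hN⟩ : Fin N) then (if min (⟨0, hN⟩ : Fin N) t = k then a * u t else 0) else 0)
        + (if i = (⟨N - 1, hNl⟩ : Fin N) then
            (if min (⟨N - 1, hNl⟩ : Fin N) t = k then b * u t else 0) else 0) := by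
    intro i t
    by_cases h0 : i = (⟨0, hN⟩ : Fin N) <;> by_cases hl : i = (⟨N - 1, hNl⟩ : Fin N)
    · rw [if_pos h0, if_pos hl, ← h0, ← hl,
        if_pos (show (i : ℕ) = 0 by rw [h0]), if_pos (show (i : ℕ) = N - 1 by rw [hl])]
      split <;> ring
    · rw [if_pos h0, if_neg hl, ← h0,
        if_pos (show (i : ℕ) = 0 by rw [h0]),
        if_neg (show ¬(i : ℕ) = N - 1 from fun hh => hl (Fin.ext hh))]
      split <;> ring
    · rw [if_neg h0, if_pos hl, ← hl,
        if_neg (show ¬(i : ℕ) = 0 from fun hh => h0 (Fin.ext hh)),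
        if_pos (show (i : ℕ) = N - 1 by rw [hl])]
      split <;> ring
    · rw [if_neg h0, if_neg hl,
        if_neg (show ¬(i : ℕ) = 0 from fun hh => h0 (Fin.ext hh)),
        if_neg (show ¬(i : ℕ) = N - 1 from fun hh => hl (Fin.ext hh))]
      split <;> ring
  simp only [h1, Finset.sum_add_distrib, Finset.sum_ite_eq', Finset.mem_univ, if_true]
  have hmin0 : ∀ t : Fin N, min (⟨0, hN⟩ : Fin N) t = (⟨0, hN⟩ : Fin N) :=
    fun t => min_eq_left (by simp [Fin.le_def])
  have hminl : ∀ t : Fin N, min (⟨N - 1, hNl⟩ : Fin N) t = t := by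
    intro t
    refine min_eq_right ?_
    have := t.isLt
    simp [Fin.le_def]; omega
  simp only [hmin0, hminl, Finset.sum_ite_eq', Finset.mem_univ, if_true]
  by_cases hc : (⟨0, hN⟩ : Fin N) = k <;> simp [hc, Finset.mul_sum]

lemma smax_key {N : ℕ} (hN : 0 < N) (a b : ℝ) (p u : Fin N → ℝ) (k : Fin N)
    (hp : ∀ t, p t ≠ 0 → t ≤ k) (hu : ∀ t, u t ≠ 0 → k ≤ t) (s : Fin N) :
    smax p (smin (endSwitch N a b) u) s
      = a * (∑ t, u t) * p s + b * (∑ t, p t) * u s := by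
  unfold smax
  simp_rw [smin_end hN a b u]
  have h1 : ∀ t1 t2 : Fin N,
      (if max t1 t2 = s then
        p t1 * ((if (⟨0, hN⟩ : Fin N) = t2 then a * ∑ t, u t else 0) + b * u t2) else 0)
      = (if t2 = (⟨0, hN⟩ : Fin N) then (if t1 = s then p t1 * (a * ∑ t, u t) else 0) else 0)
        + (if t2 = s then p t1 * (b * u t2) else 0) := by
    intro t1 t2
    by_cases h2 : t2 = (⟨0, hN⟩ : Fin N)
    · subst h2
      have hm : max t1 (⟨0, hN⟩ : Fin N) = t1 := max_eq_left (by simp [Fin.le_def])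
      by_cases hu2 : u (⟨0, hN⟩ : Fin N) = 0
      · rw [hm, if_pos rfl, if_pos rfl, hu2]
        split <;> split <;> ring
      · have hk : k = (⟨0, hN⟩ : Fin N) :=
          le_antisymm (hu _ hu2) (by simp [Fin.le_def])
        by_cases hp1 : p t1 = 0
        · simp [hp1]
        · have ht1 : t1 = (⟨0, hN⟩ : Fin N) :=
            le_antisymm (hk ▸ hp t1 hp1) (by simp [Fin.le_def])
          rw [hm, if_pos rfl, if_pos rfl, ht1]
          split <;> ring
    · rw [if_neg h2, if_neg (fun h => h2 h.symm : ¬((⟨0, hN⟩ : Fin N) = t2)), zero_add]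
      by_cases hp1 : p t1 = 0
      · simp [hp1]
      · by_cases hu2 : u t2 = 0
        · simp [hu2]
        · have hm : max t1 t2 = t2 := max_eq_right (le_trans (hp t1 hp1) (hu t2 hu2))
          rw [hm]
          exact (zero_add _).symm
  simp only [h1, Finset.sum_add_distrib, Finset.sum_ite_eq', Finset.mem_univ, if_true]
  rw [← Finset.sum_mul]
  ring

/-- The perturbed-pair family `𝒫(ε)`: triples `(p, p̃, (i, j))`, where `p` is the
ideal distribution built by the binary `N`-state construction on states
`i, …, j` and `p̃` is the distribution of the same circuit in which each
½-pswitch `½·δ₀ + ½·δ_{N-1}` is perturbed to `(½+ε̂)·δ₀ + (½-ε̂)·δ_{N-1}` with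
`|ε̂| ≤ ε`. -/
inductive Pert (N : ℕ) (ε : ℝ) :
    (Fin N → ℝ) → (Fin N → ℝ) → Fin N → Fin N → Prop
  | point (s : Fin N) : Pert N ε (delta s) (delta s) s s
  | step {p p' u u' : Fin N → ℝ} {i k j : Fin N} {ε' : ℝ} :
      Pert N ε p p' i k → Pert N ε u u' k j →
      (∀ t, p t ≠ 0 → i ≤ t ∧ t ≤ k) → (∀ t, p' t ≠ 0 → i ≤ t ∧ t ≤ k) →
      (∀ t, u t ≠ 0 → k ≤ t ∧ t ≤ j) → (∀ t, u' t ≠ 0 → k ≤ t ∧ t ≤ j) →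
      |ε'| ≤ ε →
      Pert N ε (smax p (smin (endSwitch N (1 / 2) (1 / 2)) u))
        (smax p' (smin (endSwitch N (1 / 2 + ε') (1 / 2 - ε')) u')) i j

lemma pert_main {N : ℕ} {ε : ℝ} (hε0 : 0 ≤ ε) (hε : ε ≤ 1 / 2)
    {p p' : Fin N → ℝ} {i j : Fin N} (h : Pert N ε p p' i j) :
    (∀ t, 0 ≤ p t) ∧ (∀ t, 0 ≤ p' t) ∧ (∑ t, p t) = 1 ∧ (∑ t, p' t) = 1 ∧
      (∀ s, |p' s - p s| ≤ 3 * ε) ∧ |p' i - p i| ≤ 2 * ε ∧ |p' j - p j| ≤ 2 * ε := by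
  induction h with
  | point s =>
      refine ⟨?_, ?_, ?_, ?_, ?_, ?_, ?_⟩ <;>
        simp [delta, Finset.sum_ite_eq'] <;>
        first
          | linarith
          | (intro t; first
              | linarith
              | (split <;> norm_num))
  | @step p p' u u' i k j ε' h1 h2 hpk hp'k huk hu'k hε' ih1 ih2 =>
      obtain ⟨pnn, p'nn, psum, p'sum, pall, pbi, pbk⟩ := ih1
      obtain ⟨unn, u'nn, usum, u'sum, uall, ubk, ubj⟩ := ih2
      have hN0 : 0 < N := Fin.pos i
      have hq : ∀ s, smax p (smin (endSwitch N (1 / 2) (1 / 2)) u) s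
          = (1 / 2) * p s + (1 / 2) * u s := by
        intro s
        rw [smax_key hN0 _ _ p u k (fun t ht => (hpk t ht).2) (fun t ht => (huk t ht).1),
          usum, psum]
        ring
      have hq' : ∀ s, smax p' (smin (endSwitch N (1 / 2 + ε') (1 / 2 - ε')) u') s
          = (1 / 2 + ε') * p' s + (1 / 2 - ε') * u' s := by
        intro s
        rw [smax_key hN0 _ _ p' u' k (fun t ht => (hp'k t ht).2) (fun t ht => (hu'k t ht).1),
          u'sum, p'sum]
        ring
      obtain ⟨hε'l, hε'r⟩ := abs_le.mp hε'
      have p'le : ∀ s, p' s ≤ 1 := fun s =>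
        p'sum ▸ Finset.single_le_sum (fun t _ => p'nn t) (Finset.mem_univ s)
      have u'le : ∀ s, u' s ≤ 1 := fun s =>
        u'sum ▸ Finset.single_le_sum (fun t _ => u'nn t) (Finset.mem_univ s)
      have hik : i ≤ k := by
        obtain ⟨t, ht⟩ : ∃ t, p t ≠ 0 := by
          by_contra hc
          push_neg at hc
          rw [Finset.sum_congr rfl (fun t _ => hc t)] at psum
          simp at psum
        exact le_trans (hpk t ht).1 (hpk t ht).2
      have hkj : k ≤ j := by
        obtain ⟨t, ht⟩ : ∃ t, u t ≠ 0 := by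
          by_contra hc
          push_neg at hc
          rw [Finset.sum_congr rfl (fun t _ => hc t)] at usum
          simp at usum
        exact le_trans (huk t ht).1 (huk t ht).2
      have key : ∀ s, |(1 / 2 + ε') * p' s + (1 / 2 - ε') * u' s
            - ((1 / 2) * p s + (1 / 2) * u s)|
          ≤ (1 / 2) * |p' s - p s| + (1 / 2) * |u' s - u s| + |ε'| * |p' s - u' s| := by
        intro s
        have e : (1 / 2 + ε') * p' s + (1 / 2 - ε') * u' s - ((1 / 2) * p s + (1 / 2) * u s)
            = (1 / 2) * (p' s - p s) + (1 / 2) * (u' s - u s) + ε' * (p' s - u' s) := by ring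
        rw [e]
        have t1 := abs_add_le ((1 / 2) * (p' s - p s) + (1 / 2) * (u' s - u s))
          (ε' * (p' s - u' s))
        have t2 := abs_add_le ((1 / 2) * (p' s - p s)) ((1 / 2) * (u' s - u s))
        rw [abs_mul, abs_mul] at t2
        rw [abs_mul] at t1
        have h12 : |(1 / 2 : ℝ)| = 1 / 2 := by norm_num
        rw [h12] at t2
        linarith
      -- bounded differences helper
      have hmul : ∀ x : ℝ, |x| ≤ 1 → |ε'| * |x| ≤ ε :=
        fun x hx => le_trans (mul_le_mul hε' hx (abs_nonneg _) hε0) (by linarith)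
      refine ⟨?_, ?_, ?_, ?_, ?_, ?_, ?_⟩
      · intro t
        rw [hq]
        have := pnn t; have := unn t
        linarith
      · intro t
        rw [hq']
        have h2 : (0:ℝ) ≤ 1 / 2 + ε' := by linarith
        have h3 : (0:ℝ) ≤ 1 / 2 - ε' := by linarith
        have := mul_nonneg h2 (p'nn t)
        have := mul_nonneg h3 (u'nn t)
        linarith
      · simp only [hq]
        rw [Finset.sum_add_distrib, ← Finset.mul_sum, ← Finset.mul_sum, psum, usum]
        norm_num
      · simp only [hq']
        rw [Finset.sum_add_distrib, ← Finset.mul_sum, ← Finset.mul_sum, p'sum, u'sum]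
        ring
      · intro s
        rw [hq, hq']
        refine le_trans (key s) ?_
        by_cases hsk : s = k
        · subst hsk
          have h1 : |p' s - u' s| ≤ 1 :=
            abs_le.mpr ⟨by linarith [p'nn s, u'le s], by linarith [u'nn s, p'le s]⟩
          have := hmul _ h1
          linarith
        · by_cases hks : k ≤ s
          · have hsn : ¬ s ≤ k := fun hh => hsk (le_antisymm hh hks)
            have hps : p s = 0 := by by_contra hc; exact hsn (hpk s hc).2
            have hp's : p' s = 0 := by by_contra hc; exact hsn (hp'k s hc).2
            have e1 : |p' s - p s| = 0 := by rw [hps, hp's]; simp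
            have h1 : |p' s - u' s| ≤ 1 := by
              rw [hp's]
              rw [abs_le]
              constructor <;> [linarith [u'le s]; linarith [u'nn s]]
            have := hmul _ h1
            have := uall s
            linarith
          · have hus : u s = 0 := by by_contra hc; exact hks (huk s hc).1
            have hu's : u' s = 0 := by by_contra hc; exact hks (hu'k s hc).1
            have e1 : |u' s - u s| = 0 := by rw [hus, hu's]; simp
            have h1 : |p' s - u' s| ≤ 1 := by
              rw [hu's]
              rw [abs_le]
              constructor <;> [linarith [p'nn s]; linarith [p'le s]]
            have := hmul _ h1
            have := pall s
            linarith
      · rw [hq, hq']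
        refine le_trans (key i) ?_
        by_cases hik' : i = k
        · have hp1 : p i = 1 := by
            have hz : ∀ t, t ≠ i → p t = 0 := by
              intro t ht
              by_contra hc
              exact ht (le_antisymm (hik' ▸ (hpk t hc).2) (hpk t hc).1)
            calc p i = ∑ t, p t :=
                  (Finset.sum_eq_single_of_mem i (Finset.mem_univ i)
                    (fun t _ ht => hz t ht)).symm
              _ = 1 := psum
          have hp'1 : p' i = 1 := by
            have hz : ∀ t, t ≠ i → p' t = 0 := by
              intro t ht
              by_contra hc
              exact ht (le_antisymm (hik' ▸ (hp'k t hc).2) (hp'k t hc).1)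
            calc p' i = ∑ t, p' t :=
                  (Finset.sum_eq_single_of_mem i (Finset.mem_univ i)
                    (fun t _ ht => hz t ht)).symm
              _ = 1 := p'sum
          have e1 : |p' i - p i| = 0 := by rw [hp1, hp'1]; simp
          have e2 : |u' i - u i| ≤ 2 * ε := hik' ▸ ubk
          have h1 : |p' i - u' i| ≤ 1 := by
            rw [hp'1, abs_le]
            constructor <;> [linarith [u'le i]; linarith [u'nn i]]
          have := hmul _ h1
          linarith
        · have hki : ¬ k ≤ i := fun hh => hik' (le_antisymm hik hh)
          have hus : u i = 0 := by by_contra hc; exact hki (huk i hc).1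
          have hu's : u' i = 0 := by by_contra hc; exact hki (hu'k i hc).1
          have e1 : |u' i - u i| = 0 := by rw [hus, hu's]; simp
          have h1 : |p' i - u' i| ≤ 1 := by
            rw [hu's, abs_le]
            constructor <;> [linarith [p'nn i]; linarith [p'le i]]
          have := hmul _ h1
          linarith
      · rw [hq, hq']
        refine le_trans (key j) ?_
        by_cases hkj' : k = j
        · have hu1 : u j = 1 := by
            have hz : ∀ t, t ≠ j → u t = 0 := by
              intro t ht
              by_contra hc
              exact ht (le_antisymm (huk t hc).2 (hkj' ▸ (huk t hc).1))
            calc u j = ∑ t, u t :=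
                  (Finset.sum_eq_single_of_mem j (Finset.mem_univ j)
                    (fun t _ ht => hz t ht)).symm
              _ = 1 := usum
          have hu'1 : u' j = 1 := by
            have hz : ∀ t, t ≠ j → u' t = 0 := by
              intro t ht
              by_contra hc
              exact ht (le_antisymm (hu'k t hc).2 (hkj' ▸ (hu'k t hc).1))
            calc u' j = ∑ t, u' t :=
                  (Finset.sum_eq_single_of_mem j (Finset.mem_univ j)
                    (fun t _ ht => hz t ht)).symm
              _ = 1 := u'sum
          have e1 : |u' j - u j| = 0 := by rw [hu1, hu'1]; simp
          have e2 : |p' j - p j| ≤ 2 * ε := hkj' ▸ pbk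
          have h1 : |p' j - u' j| ≤ 1 := by
            rw [hu'1, abs_le]
            constructor <;> [linarith [p'nn j]; linarith [p'le j]]
          have := hmul _ h1
          linarith
        · have hjk : ¬ j ≤ k := fun hh => hkj' (le_antisymm hkj hh)
          have hps : p j = 0 := by by_contra hc; exact hjk (hpk j hc).2
          have hp's : p' j = 0 := by by_contra hc; exact hjk (hp'k j hc).2
          have e1 : |p' j - p j| = 0 := by rw [hps, hp's]; simp
          have h1 : |p' j - u' j| ≤ 1 := by
            rw [hp's, abs_le]
            constructor <;> [linarith [u'le j]; linarith [u'nn j]]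
          have := hmul _ h1
          linarith


/-- Robustness of binary `N`-state distributions: for every `(p, p̃, (i, j))` in
`𝒫(ε)`, every state has error at most `3ε`, and the boundary states `i` and `j`
have error at most `2ε`. -/
theorem robustness_binary (N : ℕ) (hN : 2 ≤ N) (ε : ℝ) (hε0 : 0 ≤ ε) (hε : ε ≤ 1 / 2)
    (p p' : Fin N → ℝ) (i j : Fin N) (h : Pert N ε p p' i j) :
    (∀ s : Fin N, |p' s - p s| ≤ 3 * ε) ∧
    |p' i - p i| ≤ 2 * ε ∧ |p' j - p j| ≤ 2 * ε := by
  obtain ⟨-, -, -, -, h1, h2, h3⟩ := pert_main hε0 hε h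
  exact ⟨h1, h2, h3⟩
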